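/- Let Γ be a connected signed graph. Then det(L(Γ)) = 0 if and only if Γ is balanced. Equivalently, L(Γ) is positive definite if and only if Γ is unbalanced. -/

import Mathlib

open Matrix Finset

theorem stmt_7 {n : ℕ} (G : SimpleGraph (Fin n)) [DecidableRel G.Adj]
    (hconn : G.Connected)
    (σ : Fin n → Fin n → ℝ)
    (hσ : ∀ i j, G.Adj i j → σ i j = 1 ∨ σ i j = -1)
    (hsym : ∀ i j, σ i j = σ j i)
    (L : Matrix (Fin n) (Fin n) ℝ)
    (hL : L = fun i j => (if i = j then (G.degree i : ℝ) else 0) -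
      (if G.Adj i j then σ i j else 0)) :
    (L.det = 0 ↔ ∃ θ : Fin n → ℝ, (∀ v, θ v = 1 ∨ θ v = -1) ∧
        ∀ i j, G.Adj i j → σ i j = θ i * θ j) ∧
    (L.PosDef ↔ ¬ ∃ θ : Fin n → ℝ, (∀ v, θ v = 1 ∨ θ v = -1) ∧
        ∀ i j, G.Adj i j → σ i j = θ i * θ j) := by
  obtain ⟨v0⟩ : Nonempty (Fin n) := hconn.nonempty
  have hσsq : ∀ i j, G.Adj i j → σ i j ^ 2 = 1 := fun i j h => by
    rcases hσ i j h with h1 | h1 <;> simp [h1]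
  have hdeg : ∀ i : Fin n, (G.degree i : ℝ) = ∑ j, if G.Adj i j then (1:ℝ) else 0 := by
    intro i
    rw [SimpleGraph.degree, SimpleGraph.neighborFinset_eq_filter, Finset.card_filter]
    push_cast
    simp
  have hrow : ∀ (x : Fin n → ℝ) (i : Fin n), (L *ᵥ x) i
      = (G.degree i : ℝ) * x i - ∑ j, (if G.Adj i j then σ i j * x j else 0) := by
    intro x i
    simp only [hL, mulVec, dotProduct, sub_mul, Finset.sum_sub_distrib, ite_mul, zero_mul]
    congr 1
    simp [Finset.sum_ite_eq]
  -- quadratic form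
  have hq : ∀ x : Fin n → ℝ, x ⬝ᵥ (L *ᵥ x)
      = ∑ i, ∑ j, (if G.Adj i j then x i ^ 2 - σ i j * x i * x j else 0) := by
    intro x
    calc x ⬝ᵥ (L *ᵥ x)
        = ∑ i, x i * ((G.degree i : ℝ) * x i - ∑ j, (if G.Adj i j then σ i j * x j else 0)) := by
          apply Finset.sum_congr rfl; intro i _; rw [hrow]
      _ = ∑ i, ((G.degree i : ℝ) * x i ^ 2 - ∑ j, (if G.Adj i j then σ i j * x i * x j else 0)) := by
          apply Finset.sum_congr rfl; intro i _
          rw [mul_sub]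
          congr 1
          · ring
          · rw [Finset.mul_sum]
            apply Finset.sum_congr rfl; intro j _
            split <;> ring
      _ = ∑ i, ∑ j, (if G.Adj i j then x i ^ 2 - σ i j * x i * x j else 0) := by
          apply Finset.sum_congr rfl; intro i _
          rw [hdeg, Finset.sum_mul, ← Finset.sum_sub_distrib]
          apply Finset.sum_congr rfl; intro j _
          split <;> ring
  -- double of quadratic form is sum of squares
  have hQ : ∀ x : Fin n → ℝ, 2 * (x ⬝ᵥ (L *ᵥ x))
      = ∑ i, ∑ j, (if G.Adj i j then (x i - σ i j * x j) ^ 2 else 0) := by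
    intro x
    rw [hq]
    have hswap : ∑ i, ∑ j, (if G.Adj i j then x j ^ 2 else 0)
        = ∑ i, ∑ j, (if G.Adj i j then x i ^ 2 else 0) := by
      rw [Finset.sum_comm]
      apply Finset.sum_congr rfl; intro i _
      apply Finset.sum_congr rfl; intro j _
      simp [SimpleGraph.adj_comm]
    calc 2 * ∑ i, ∑ j, (if G.Adj i j then x i ^ 2 - σ i j * x i * x j else 0)
        = (∑ i, ∑ j, (if G.Adj i j then x i ^ 2 - σ i j * x i * x j else 0))
          + ((∑ i, ∑ j, (if G.Adj i j then x i ^ 2 - σ i j * x i * x j else 0))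
            - (∑ i, ∑ j, (if G.Adj i j then x i ^ 2 else 0))
            + (∑ i, ∑ j, (if G.Adj i j then x j ^ 2 else 0))) := by
          rw [hswap]; ring
      _ = ∑ i, ∑ j, (if G.Adj i j then (x i - σ i j * x j) ^ 2 else 0) := by
          simp only [← Finset.sum_add_distrib, ← Finset.sum_sub_distrib]
          apply Finset.sum_congr rfl; intro i _
          apply Finset.sum_congr rfl; intro j _
          by_cases h : G.Adj i j
          · simp only [h, if_true]
            nlinarith [hσsq i j h]
          · simp [h]
  -- nonnegativity
  have hq0 : ∀ x : Fin n → ℝ, 0 ≤ x ⬝ᵥ (L *ᵥ x) := by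
    intro x
    have h2 : 0 ≤ 2 * (x ⬝ᵥ (L *ᵥ x)) := by
      rw [hQ]
      apply Finset.sum_nonneg; intro i _
      apply Finset.sum_nonneg; intro j _
      positivity
    linarith
  -- kernel characterization: q x = 0 → edge relation
  have hker : ∀ x : Fin n → ℝ, x ⬝ᵥ (L *ᵥ x) = 0 →
      ∀ i j, G.Adj i j → x i = σ i j * x j := by
    intro x hx i j hij
    have h2 : ∑ i, ∑ j, (if G.Adj i j then (x i - σ i j * x j) ^ 2 else 0) = 0 := by
      rw [← hQ, hx]; ring
    have hterm := (Finset.sum_eq_zero_iff_of_nonneg (fun i _ => by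
      apply Finset.sum_nonneg; intro j _; positivity)).mp h2 i (Finset.mem_univ i)
    have hterm2 := (Finset.sum_eq_zero_iff_of_nonneg (fun j _ => by positivity)).mp
      hterm j (Finset.mem_univ j)
    rw [if_pos hij] at hterm2
    have := pow_eq_zero_iff (n := 2) (by norm_num) |>.mp hterm2
    linarith [this]
  -- edge relation → L x = 0
  have hmul0 : ∀ x : Fin n → ℝ, (∀ i j, G.Adj i j → x i = σ i j * x j) → L *ᵥ x = 0 := by
    intro x hx
    funext i
    rw [Pi.zero_apply, hrow, hdeg, Finset.sum_mul, sub_eq_zero]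
    apply Finset.sum_congr rfl
    intro j _
    by_cases h : G.Adj i j
    · simp only [h, if_true, one_mul]
      exact hx i j h
    · simp [h]
  -- edge relation + x ≠ 0 → balanced
  have hbal : ∀ x : Fin n → ℝ, (∀ i j, G.Adj i j → x i = σ i j * x j) → x ≠ 0 →
      ∃ θ : Fin n → ℝ, (∀ v, θ v = 1 ∨ θ v = -1) ∧ ∀ i j, G.Adj i j → σ i j = θ i * θ j := by
    intro x hx hx0
    obtain ⟨v, hv⟩ : ∃ v, x v ≠ 0 := by
      by_contra h
      push_neg at h
      exact hx0 (funext h)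
    have hstep : ∀ a b, G.Adj a b → x a ^ 2 = x b ^ 2 := by
      intro a b hab
      rw [hx a b hab, mul_pow, hσsq a b hab, one_mul]
    have hconst0 : ∀ u w : Fin n, G.Reachable u w → x u ^ 2 = x w ^ 2 := by
      intro u w h
      obtain ⟨p⟩ := h
      induction p with
      | nil => rfl
      | cons h p ih => rw [hstep _ _ h, ih]
    have hconst : ∀ u, x u ^ 2 = x v ^ 2 := fun u => hconst0 u v (hconn.preconnected u v)
    have hxne : ∀ u, x u ≠ 0 := by
      intro u hu
      apply hv
      have h1 := hconst u
      rw [hu] at h1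
      nlinarith [h1]
    refine ⟨fun u => x u / x v, ?_, ?_⟩
    · intro u
      rcases sq_eq_sq_iff_eq_or_eq_neg.mp (hconst u) with h | h
      · left; show x u / x v = 1; rw [h]; field_simp
      · right; show x u / x v = -1; rw [h]; field_simp
    · intro i j hij
      show σ i j = x i / x v * (x j / x v)
      have hj := hxne j
      have hv2 : x j ^ 2 = x v ^ 2 := hconst j
      have hσval : σ i j = x i / x j := by
        rw [hx i j hij]; field_simp
      rw [hσval]
      field_simp
      linear_combination (-(x i)) * hv2
  -- balanced → edge relation for θ
  have hrel : ∀ θ : Fin n → ℝ, (∀ v, θ v = 1 ∨ θ v = -1) →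
      (∀ i j, G.Adj i j → σ i j = θ i * θ j) → (∀ i j, G.Adj i j → θ i = σ i j * θ j) := by
    intro θ hθ hθσ i j hij
    rw [hθσ i j hij]
    rcases hθ j with h | h <;> rw [h] <;> ring
  have main : L.det = 0 ↔ ∃ θ : Fin n → ℝ, (∀ v, θ v = 1 ∨ θ v = -1) ∧
      ∀ i j, G.Adj i j → σ i j = θ i * θ j := by
    rw [← Matrix.exists_mulVec_eq_zero_iff]
    constructor
    · rintro ⟨x, hx0, hx⟩
      have hq0' : x ⬝ᵥ (L *ᵥ x) = 0 := by rw [hx]; simp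
      exact hbal x (hker x hq0') hx0
    · rintro ⟨θ, hθ, hθσ⟩
      refine ⟨θ, ?_, hmul0 θ (hrel θ hθ hθσ)⟩
      intro h
      have h0 := congrFun h v0
      rcases hθ v0 with h1 | h1 <;> rw [h1] at h0 <;> simp at h0 <;> linarith [h0]
  refine ⟨main, ?_, ?_⟩
  · intro hpd hb
    have hdp := hpd.det_pos
    rw [main.mpr hb] at hdp
    exact lt_irrefl 0 hdp
  · intro hb
    have hherm : L.IsHermitian := by
      ext i j
      simp only [Matrix.conjTranspose_apply, star_trivial]
      rw [hL]
      dsimp only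
      congr 1
      · rcases eq_or_ne i j with rfl | h
        · rfl
        · rw [if_neg h, if_neg (Ne.symm h)]
      · by_cases ha : G.Adj i j
        · rw [if_pos ha, if_pos ha.symm, hsym j i]
        · rw [if_neg ha, if_neg (fun h => ha h.symm)]
    refine Matrix.PosDef.of_dotProduct_mulVec_pos hherm (fun x hx => ?_)
    have hge := hq0 x
    rcases lt_or_eq_of_le hge with h | h
    · simpa using h
    · exfalso
      exact hb (hbal x (hker x h.symm) hx)
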